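/- Let X, Y, E be nonempty sets, ℋ a nonempty family of mappings from X to Y, G a (real or complex) Banach space, K a compact Hausdorff topological space, 0 < p < ∞, and let R : K × E × G → [0,∞) and S : ℋ × E × G → [0,∞) be maps. Suppose only that R satisfies property (2): for every x ∈ E and b ∈ G, the map φ ↦ R(φ, x, b) is continuous on K (no hypothesis is imposed on S). Then a map f ∈ ℋ is RS-abstract p-summing if and only if there exist a constant C > 0 and a Borel probability measure μ on K such that S(f, x, b) ≤ C (∫_K R(φ, x, b)^p dμ(φ))^{1/p} for all x ∈ E and b ∈ G. -/

import Mathlib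

open MeasureTheory TopologicalSpace Set
open scoped NNReal ENNReal

namespace PietschAux

variable {K : Type*} [TopologicalSpace K] [CompactSpace K] [T2Space K] [Nonempty K]
  [MeasurableSpace K] [BorelSpace K]

lemma iSup_eq_at {u : K → ℝ} {φ0 : K} (hmax : ∀ φ, u φ ≤ u φ0) : (⨆ φ, u φ) = u φ0 :=
  le_antisymm (ciSup_le hmax)
    (le_ciSup ⟨u φ0, by rintro - ⟨φ, rfl⟩; exact hmax φ⟩ φ0)

lemma exists_max {u : K → ℝ} (hu : Continuous u) : ∃ φ0, ∀ φ, u φ ≤ u φ0 := by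
  obtain ⟨φ0, -, h⟩ := isCompact_univ.exists_isMaxOn univ_nonempty hu.continuousOn
  exact ⟨φ0, fun φ => h (mem_univ φ)⟩

/-- Test values for the Riesz content. -/
def testSet (ℓ : C(K, ℝ) →ₗ[ℝ] ℝ) (F : Set K) : Set ℝ :=
  {r | ∃ g : C(K, ℝ), (∀ x, 0 ≤ g x) ∧ (∀ x ∈ F, 1 ≤ g x) ∧ ℓ g = r}

variable (ℓ : C(K, ℝ) →ₗ[ℝ] ℝ)

lemma testSet_nonempty (F : Set K) : (testSet ℓ F).Nonempty :=
  ⟨ℓ 1, 1, fun _ => zero_le_one, fun _ _ => le_refl _, rfl⟩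

variable (hpos : ∀ g : C(K, ℝ), (∀ x, 0 ≤ g x) → 0 ≤ ℓ g)

include hpos

lemma testSet_nonneg {F : Set K} {r : ℝ} (hr : r ∈ testSet ℓ F) : 0 ≤ r := by
  obtain ⟨g, hg0, -, rfl⟩ := hr
  exact hpos g hg0

lemma testSet_bddBelow (F : Set K) : BddBelow (testSet ℓ F) :=
  ⟨0, fun r hr => testSet_nonneg ℓ hpos hr⟩

/-- The Riesz content associated to a positive functional. -/
noncomputable def rieszCont : Content K where
  toFun F := Real.toNNReal (sInf (testSet ℓ F))
  mono' F₁ F₂ h := by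
    apply Real.toNNReal_mono
    exact csInf_le_csInf (testSet_bddBelow ℓ hpos F₁) (testSet_nonempty ℓ F₂)
      (fun r ⟨g, hg0, hg1, hgr⟩ => ⟨g, hg0, fun x hx => hg1 x (h hx), hgr⟩)
  sup_disjoint' F₁ F₂ hdisj h₁ h₂ := by
    apply le_antisymm
    · -- subadditivity (same proof as sup_le')
      rw [← Real.toNNReal_add (le_csInf (testSet_nonempty ℓ _)
          (fun r hr => testSet_nonneg ℓ hpos hr))
          (le_csInf (testSet_nonempty ℓ _) (fun r hr => testSet_nonneg ℓ hpos hr))]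
      apply Real.toNNReal_mono
      apply le_of_forall_pos_le_add
      intro ε hε
      obtain ⟨r₁, hr₁, hr₁'⟩ := exists_lt_of_csInf_lt (testSet_nonempty ℓ F₁)
        (lt_add_of_pos_right _ (half_pos hε) : sInf (testSet ℓ F₁) < _)
      obtain ⟨r₂, hr₂, hr₂'⟩ := exists_lt_of_csInf_lt (testSet_nonempty ℓ F₂)
        (lt_add_of_pos_right _ (half_pos hε) : sInf (testSet ℓ F₂) < _)
      obtain ⟨g₁, hg₁0, hg₁1, rfl⟩ := hr₁
      obtain ⟨g₂, hg₂0, hg₂1, rfl⟩ := hr₂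
      have : ℓ (g₁ + g₂) ∈ testSet ℓ (↑(F₁ ⊔ F₂)) := by
        refine ⟨g₁ + g₂, fun x => add_nonneg (hg₁0 x) (hg₂0 x), fun x hx => ?_, rfl⟩
        rcases hx with hx | hx
        · calc (1:ℝ) ≤ g₁ x := hg₁1 x hx
            _ ≤ g₁ x + g₂ x := le_add_of_nonneg_right (hg₂0 x)
          -- need : 1 ≤ (g₁ + g₂) x
        · calc (1:ℝ) ≤ g₂ x := hg₂1 x hx
            _ ≤ g₁ x + g₂ x := le_add_of_nonneg_left (hg₁0 x)
      calc sInf (testSet ℓ ↑(F₁ ⊔ F₂)) ≤ ℓ (g₁ + g₂) := csInf_le (testSet_bddBelow ℓ hpos _) this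
        _ = ℓ g₁ + ℓ g₂ := map_add ℓ g₁ g₂
        _ ≤ (sInf (testSet ℓ F₁) + ε/2) + (sInf (testSet ℓ F₂) + ε/2) :=
            add_le_add hr₁'.le hr₂'.le
        _ = sInf (testSet ℓ F₁) + sInf (testSet ℓ F₂) + ε := by ring
    · -- superadditivity, via Urysohn
      obtain ⟨u, hu₁, hu₂, hu01⟩ := exists_continuous_zero_one_of_isClosed h₁ h₂ hdisj
      rw [← Real.toNNReal_add (le_csInf (testSet_nonempty ℓ _)
          (fun r hr => testSet_nonneg ℓ hpos hr))
          (le_csInf (testSet_nonempty ℓ _) (fun r hr => testSet_nonneg ℓ hpos hr))]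
      apply Real.toNNReal_mono
      apply le_csInf (testSet_nonempty ℓ _)
      rintro r ⟨g, hg0, hg1, rfl⟩
      have key : sInf (testSet ℓ F₁) + sInf (testSet ℓ F₂) ≤ ℓ (g * (1 - u)) + ℓ (g * u) := by
        apply add_le_add
        · apply csInf_le (testSet_bddBelow ℓ hpos _)
          refine ⟨g * (1 - u), fun x => mul_nonneg (hg0 x) (by
              have := (hu01 x).2; simp only [ContinuousMap.sub_apply,
                ContinuousMap.one_apply]; linarith), fun x hx => ?_, rfl⟩
          have hgx : (1:ℝ) ≤ g x := hg1 x (Or.inl hx)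
          have hux : u x = 0 := hu₁ hx
          simp only [ContinuousMap.mul_apply, ContinuousMap.sub_apply,
            ContinuousMap.one_apply, hux]
          linarith
        · apply csInf_le (testSet_bddBelow ℓ hpos _)
          refine ⟨g * u, fun x => mul_nonneg (hg0 x) (hu01 x).1, fun x hx => ?_, rfl⟩
          have hgx : (1:ℝ) ≤ g x := hg1 x (Or.inr hx)
          have hux : u x = 1 := hu₂ hx
          simp only [ContinuousMap.mul_apply, hux, mul_one]
          exact hgx
      calc sInf (testSet ℓ F₁) + sInf (testSet ℓ F₂) ≤ ℓ (g * (1 - u)) + ℓ (g * u) := key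
        _ = ℓ (g * (1 - u) + g * u) := (map_add ℓ _ _).symm
        _ = ℓ g := by ring_nf
  sup_le' F₁ F₂ := by
    rw [← Real.toNNReal_add (le_csInf (testSet_nonempty ℓ _)
        (fun r hr => testSet_nonneg ℓ hpos hr))
        (le_csInf (testSet_nonempty ℓ _) (fun r hr => testSet_nonneg ℓ hpos hr))]
    apply Real.toNNReal_mono
    apply le_of_forall_pos_le_add
    intro ε hε
    obtain ⟨r₁, hr₁, hr₁'⟩ := exists_lt_of_csInf_lt (testSet_nonempty ℓ F₁)
      (lt_add_of_pos_right _ (half_pos hε) : sInf (testSet ℓ F₁) < _)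
    obtain ⟨r₂, hr₂, hr₂'⟩ := exists_lt_of_csInf_lt (testSet_nonempty ℓ F₂)
      (lt_add_of_pos_right _ (half_pos hε) : sInf (testSet ℓ F₂) < _)
    obtain ⟨g₁, hg₁0, hg₁1, rfl⟩ := hr₁
    obtain ⟨g₂, hg₂0, hg₂1, rfl⟩ := hr₂
    have : ℓ (g₁ + g₂) ∈ testSet ℓ (↑(F₁ ⊔ F₂)) := by
      refine ⟨g₁ + g₂, fun x => add_nonneg (hg₁0 x) (hg₂0 x), fun x hx => ?_, rfl⟩
      rcases hx with hx | hx
      · calc (1:ℝ) ≤ g₁ x := hg₁1 x hx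
          _ ≤ g₁ x + g₂ x := le_add_of_nonneg_right (hg₂0 x)
      · calc (1:ℝ) ≤ g₂ x := hg₂1 x hx
          _ ≤ g₁ x + g₂ x := le_add_of_nonneg_left (hg₁0 x)
    calc sInf (testSet ℓ ↑(F₁ ⊔ F₂)) ≤ ℓ (g₁ + g₂) := csInf_le (testSet_bddBelow ℓ hpos _) this
      _ = ℓ g₁ + ℓ g₂ := map_add ℓ g₁ g₂
      _ ≤ (sInf (testSet ℓ F₁) + ε/2) + (sInf (testSet ℓ F₂) + ε/2) :=
          add_le_add hr₁'.le hr₂'.le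
      _ = sInf (testSet ℓ F₁) + sInf (testSet ℓ F₂) + ε := by ring


lemma rieszCont_apply (F : Compacts K) :
    (rieszCont ℓ hpos) F = (Real.toNNReal (sInf (testSet ℓ F)) : ℝ≥0∞) := rfl

lemma key_le (h : C(K, ℝ)) (h0 : ∀ x, 0 ≤ h x) (h1 : ∀ x, h x ≤ 1) {V : Set K}
    (hV : IsOpen V) (hsupp : tsupport h ⊆ V) :
    ENNReal.ofReal (ℓ h) ≤ (rieszCont ℓ hpos).measure V := by
  rw [Content.measure_apply _ hV.measurableSet, Content.outerMeasure_of_isOpen _ V hV]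
  refine le_trans ?_ ((rieszCont ℓ hpos).le_innerContent
    ⟨tsupport h, (isClosed_tsupport h).isCompact⟩ ⟨V, hV⟩ hsupp)
  rw [rieszCont_apply]
  have hle : ℓ h ≤ sInf (testSet ℓ (tsupport h)) := by
    apply le_csInf (testSet_nonempty ℓ _)
    rintro r ⟨g, hg0, hg1, rfl⟩
    have : (0:ℝ) ≤ ℓ (g - h) := by
      apply hpos
      intro x
      simp only [ContinuousMap.sub_apply, sub_nonneg]
      by_cases hx : x ∈ tsupport h
      · exact (h1 x).trans (hg1 x hx)
      · rw [image_eq_zero_of_notMem_tsupport hx]; exact hg0 x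
    rw [map_sub] at this; linarith
  calc ENNReal.ofReal (ℓ h) ≤ ENNReal.ofReal (sInf (testSet ℓ (tsupport h))) :=
        ENNReal.ofReal_le_ofReal hle
    _ = _ := rfl

lemma measure_univ_eq_one (hone : ℓ 1 = 1) :
    (rieszCont ℓ hpos).measure univ = 1 := by
  rw [Content.measure_apply _ MeasurableSet.univ,
    Content.outerMeasure_of_isOpen _ univ isOpen_univ]
  have h1 : sInf (testSet ℓ univ) = 1 := by
    apply le_antisymm
    · exact csInf_le (testSet_bddBelow ℓ hpos _)
        ⟨1, fun _ => zero_le_one, fun _ _ => le_refl _, hone⟩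
    · apply le_csInf (testSet_nonempty ℓ _)
      rintro r ⟨g, hg0, hg1, rfl⟩
      have : (0:ℝ) ≤ ℓ (g - 1) := by
        apply hpos
        intro x
        simp only [ContinuousMap.sub_apply, ContinuousMap.one_apply, sub_nonneg]
        exact hg1 x (mem_univ x)
      rw [map_sub, hone] at this; linarith
  apply le_antisymm
  · apply iSup_le; intro F; apply iSup_le; intro _
    calc ((rieszCont ℓ hpos) F : ℝ≥0∞) ≤ (rieszCont ℓ hpos) ⟨univ, isCompact_univ⟩ :=
          (rieszCont ℓ hpos).mono _ _ (subset_univ _)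
      _ = 1 := by rw [rieszCont_apply]; norm_num [show (↑(⟨univ, isCompact_univ⟩ : Compacts K) : Set K) = univ from rfl, h1]
  · refine le_trans ?_ ((rieszCont ℓ hpos).le_innerContent ⟨univ, isCompact_univ⟩
      ⟨univ, isOpen_univ⟩ (subset_univ _))
    rw [rieszCont_apply]
    norm_num [show (↑(⟨univ, isCompact_univ⟩ : Compacts K) : Set K) = univ from rfl, h1]

theorem exists_repr (hone : ℓ 1 = 1) :
    ∃ μ : Measure K, IsProbabilityMeasure μ ∧
      ∀ g : C(K, ℝ), (∀ x, 0 ≤ g x) → ℓ g ≤ ∫ x, g x ∂μ := by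
  classical
  set μ : Measure K := (rieszCont ℓ hpos).measure with hμdef
  have hprob : IsProbabilityMeasure μ := ⟨measure_univ_eq_one ℓ hpos hone⟩
  refine ⟨μ, hprob, fun g hg0 => ?_⟩
  -- integrability of continuous functions
  have hint : ∀ u : C(K, ℝ), Integrable (fun x => u x) μ := fun u =>
    u.continuous.integrable_of_hasCompactSupport (isClosed_tsupport _).isCompact
  apply le_of_forall_pos_le_add
  intro ε hε
  set M : ℝ := ‖g‖ with hMdef
  have hM0 : 0 ≤ M := norm_nonneg g
  have hM : ∀ x, g x ≤ M := fun x => (le_abs_self _).trans (g.norm_coe_le_norm x)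
  set δ : ℝ := min 1 (ε / (M + 2)) with hδdef
  have hδ : 0 < δ := lt_min one_pos (div_pos hε (by linarith))
  have hδ1 : δ ≤ 1 := min_le_left _ _
  have hδε : δ * (M + 1 + δ) ≤ ε := by
    calc δ * (M + 1 + δ) ≤ (ε / (M + 2)) * (M + 2) := by
          apply mul_le_mul (min_le_right _ _) (by linarith) (by linarith)
          positivity
      _ = ε := div_mul_cancel₀ _ (by linarith)
  set n : ℕ := ⌊M / δ⌋₊ + 1 with hndef
  have hn0 : 0 < n := Nat.succ_pos _
  have hn : M < n * δ := by
    have := Nat.lt_floor_add_one (M / δ)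
    calc M = (M / δ) * δ := by field_simp
      _ < (↑(⌊M / δ⌋₊ + 1)) * δ := by
          apply mul_lt_mul_of_pos_right _ hδ
          push_cast; exact this
      _ = n * δ := rfl
  have hnδ : (n : ℝ) * δ ≤ M + δ := by
    have := Nat.floor_le (div_nonneg hM0 hδ.le)
    have h2 : (n : ℝ) ≤ M / δ + 1 := by push_cast [hndef]; linarith
    calc (n : ℝ) * δ ≤ (M / δ + 1) * δ := mul_le_mul_of_nonneg_right h2 hδ.le
      _ = M + δ := by field_simp
  set E : Fin n → Set K := fun i => g ⁻¹' Ico ((i : ℕ) * δ) (((i : ℕ) + 1) * δ) with hEdef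
  have hEm : ∀ i, MeasurableSet (E i) := fun i =>
    (g.continuous.measurable) measurableSet_Ico
  have haux : ∀ {i j : ℕ} {r : ℝ}, i < j → r ∈ Ico ((i:ℝ) * δ) (((i:ℝ) + 1) * δ) →
      r ∈ Ico ((j:ℝ) * δ) (((j:ℝ) + 1) * δ) → False := by
    intro i j r hij h1 h2
    have hij' : (i : ℝ) + 1 ≤ j := by exact_mod_cast hij
    have : r < r :=
      lt_of_lt_of_le h1.2 (le_trans (mul_le_mul_of_nonneg_right hij' hδ.le) h2.1)
    exact lt_irrefl _ this
  have hEdisj : Pairwise (Function.onFun Disjoint E) := by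
    intro i j hij
    rw [Function.onFun, Set.disjoint_left]
    intro x hxi hxj
    rcases lt_trichotomy (i : ℕ) (j : ℕ) with h | h | h
    · exact haux h hxi hxj
    · exact hij (Fin.ext h)
    · exact haux h hxj hxi
  have hEuniv : ⋃ i, E i = univ := by
    apply eq_univ_of_forall
    intro x
    set k : ℕ := ⌊g x / δ⌋₊ with hkdef
    have hk : k < n := by
      have : k ≤ ⌊M / δ⌋₊ :=
        Nat.floor_le_floor (by exact (div_le_div_iff_of_pos_right hδ).mpr (hM x))
      omega
    refine mem_iUnion.mpr ⟨⟨k, hk⟩, ?_⟩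
    simp only [hEdef, mem_preimage, mem_Ico]
    constructor
    · have := Nat.floor_le (div_nonneg (hg0 x) hδ.le)
      calc ((⟨k, hk⟩ : Fin n) : ℕ) * δ = (k : ℝ) * δ := rfl
        _ ≤ (g x / δ) * δ := mul_le_mul_of_nonneg_right this hδ.le
        _ = g x := by field_simp
    · have := Nat.lt_floor_add_one (g x / δ)
      calc g x = (g x / δ) * δ := by field_simp
        _ < ((k : ℝ) + 1) * δ := mul_lt_mul_of_pos_right this hδ
  -- choose open neighborhoods
  have hex : ∀ i, ∃ U, E i ⊆ U ∧ IsOpen U ∧ μ U < μ (E i) + ENNReal.ofReal (δ / n) := by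
    intro i
    have hlt : μ (E i) < μ (E i) + ENNReal.ofReal (δ / n) :=
      ENNReal.lt_add_right (measure_ne_top μ _)
        (by simp [ENNReal.ofReal_eq_zero, not_le]; positivity)
    obtain ⟨U, hU1, hU2, hU3⟩ := Set.exists_isOpen_lt_of_lt (E i) _ hlt
    exact ⟨U, hU1, hU2, hU3⟩
  choose U hEU hUopen hUμ using hex
  set V : Fin n → Set K := fun i => U i ∩ g ⁻¹' Iio (((i : ℕ) + 1) * δ) with hVdef
  have hVopen : ∀ i, IsOpen (V i) := fun i =>
    (hUopen i).inter (isOpen_Iio.preimage g.continuous)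
  have hEV : ∀ i, E i ⊆ V i := fun i x hx =>
    ⟨hEU i hx, by simpa [hEdef, mem_Ico] using hx.2⟩
  have hVμ : ∀ i, μ (V i) ≤ μ (E i) + ENNReal.ofReal (δ / n) := fun i =>
    (measure_mono inter_subset_left).trans (hUμ i).le
  have hcover : (univ : Set K) ⊆ ⋃ i, V i := by
    rw [← hEuniv]; exact iUnion_mono hEV
  obtain ⟨h, hsub⟩ := PartitionOfUnity.exists_isSubordinate isClosed_univ V hVopen hcover
  have hsum1 : ∀ x : K, ∑ i, h i x = 1 := by
    intro x
    have := h.sum_eq_one (mem_univ x)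
    rwa [finsum_eq_sum_of_fintype] at this
  -- decomposition
  have hdecomp : ℓ g = ∑ i : Fin n, ℓ (h i * g) := by
    rw [← map_sum]
    congr 1
    ext x
    simp only [ContinuousMap.sum_apply, ContinuousMap.mul_apply]
    rw [← Finset.sum_mul, hsum1, one_mul]
  have hA : ∀ i, ℓ (h i * g) ≤ ((i.val + 1 : ℝ) * δ) * ℓ (h i) := by
    intro i
    have hp : (0:ℝ) ≤ ℓ (((i.val + 1 : ℝ) * δ) • h i - h i * g) := by
      apply hpos
      intro x
      simp only [ContinuousMap.sub_apply, ContinuousMap.smul_apply, ContinuousMap.mul_apply,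
        smul_eq_mul, sub_nonneg]
      by_cases hx : x ∈ tsupport ⇑(h i)
      · have hxV : x ∈ V i := hsub i hx
        have hgx : g x ≤ ((i.val : ℝ) + 1) * δ := le_of_lt (by simpa [hVdef] using hxV.2)
        calc h i x * g x ≤ h i x * (((i.val : ℝ) + 1) * δ) :=
              mul_le_mul_of_nonneg_left hgx (h.nonneg i x)
          _ = ((i.val : ℝ) + 1) * δ * h i x := by ring
      · rw [image_eq_zero_of_notMem_tsupport hx]
        simp
    rw [map_sub, _root_.map_smul, smul_eq_mul, sub_nonneg] at hp
    exact le_trans hp (le_refl _)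
  have hB : ∀ i, ℓ (h i) ≤ (μ (V i)).toReal := by
    intro i
    have := key_le ℓ hpos (h i) (h.nonneg i) (h.le_one i) (hVopen i) (hsub i)
    rw [← hμdef] at this
    exact (ENNReal.ofReal_le_iff_le_toReal (measure_ne_top μ _)).mp this
  set a : Fin n → ℝ := fun i => (μ (E i)).toReal with hadef
  have ha0 : ∀ i, 0 ≤ a i := fun i => ENNReal.toReal_nonneg
  have hC : ∀ i, (μ (V i)).toReal ≤ a i + δ / n := by
    intro i
    have h1 : (μ (E i) + ENNReal.ofReal (δ / n)).toReal = a i + δ / n := by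
      rw [ENNReal.toReal_add (measure_ne_top μ _) ENNReal.ofReal_ne_top,
        ENNReal.toReal_ofReal (by positivity)]
    rw [← h1]
    exact ENNReal.toReal_mono (by finiteness) (hVμ i)
  have hsa : ∑ i : Fin n, a i = 1 := by
    rw [hadef]
    rw [← ENNReal.toReal_sum (fun i _ => measure_ne_top μ _)]
    rw [← tsum_fintype (L := .unconditional _), ← measure_iUnion hEdisj hEm, hEuniv]
    simp [measure_univ]
  have hint1 : ∑ i : Fin n, (i.val : ℝ) * δ * a i ≤ ∫ x, g x ∂μ := by
    have hdec : ∫ x, g x ∂μ = ∑ i : Fin n, ∫ x in E i, g x ∂μ := by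
      rw [← setIntegral_univ, ← hEuniv,
        integral_iUnion hEm hEdisj ((hint g).integrableOn), tsum_fintype]
    rw [hdec]
    apply Finset.sum_le_sum
    intro i _
    have := setIntegral_ge_of_const_le (hEm i) (measure_ne_top μ _)
      (fun x hx => hx.1) ((hint g).integrableOn)
    simpa [hadef, measureReal_def, smul_eq_mul, mul_comm] using this
  have hℓh0 : ∀ i, 0 ≤ ℓ (h i) := fun i => hpos (h i) (h.nonneg i)
  calc ℓ g = ∑ i : Fin n, ℓ (h i * g) := hdecomp
    _ ≤ ∑ i : Fin n, ((i.val : ℝ) + 1) * δ * ℓ (h i) := Finset.sum_le_sum fun i _ => by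
        have := hA i; push_cast at this ⊢; linarith
    _ ≤ ∑ i : Fin n, ((i.val : ℝ) + 1) * δ * (a i + δ / n) := by
        apply Finset.sum_le_sum
        intro i _
        apply mul_le_mul_of_nonneg_left ((hB i).trans (hC i))
        positivity
    _ = ∑ i : Fin n, ((i.val : ℝ) * δ * a i) + δ * ∑ i : Fin n, a i
          + ∑ i : Fin n, ((i.val : ℝ) + 1) * δ * (δ / n) := by
        rw [Finset.mul_sum, ← Finset.sum_add_distrib, ← Finset.sum_add_distrib]
        apply Finset.sum_congr rfl
        intro i _
        ring
    _ ≤ ∫ x, g x ∂μ + δ * 1 + (M + δ) * δ := by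
        have h3 : ∑ i : Fin n, ((i.val : ℝ) + 1) * δ * (δ / n) ≤ (M + δ) * δ := by
          have : ∀ i : Fin n, ((i.val : ℝ) + 1) * δ * (δ / n) ≤ ((n:ℝ) * δ) * (δ / n) := by
            intro i
            apply mul_le_mul_of_nonneg_right _ (by positivity)
            apply mul_le_mul_of_nonneg_right _ hδ.le
            have : (i : ℕ) + 1 ≤ n := i.2
            exact_mod_cast this
          calc ∑ i : Fin n, ((i.val : ℝ) + 1) * δ * (δ / n) ≤ ∑ _i : Fin n, ((n:ℝ) * δ) * (δ / n) :=
                Finset.sum_le_sum fun i _ => this i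
            _ = (n : ℝ) * ((n:ℝ) * δ * (δ / n)) := by
                simp [Finset.sum_const, Finset.card_univ]
            _ = ((n:ℝ) * δ) * δ := by
                field_simp
            _ ≤ (M + δ) * δ := mul_le_mul_of_nonneg_right hnδ hδ.le
        rw [hsa]
        apply add_le_add (add_le_add hint1 (le_refl _)) h3
    _ ≤ ∫ x, g x ∂μ + ε := by
        have : δ * 1 + (M + δ) * δ = δ * (M + 1 + δ) := by ring
        linarith [hδε]

end PietschAux

open PietschAux

/-- **The main result**: the Unified Pietsch Domination Theorem holds assuming
only hypothesis (2) on `R` (continuity of `φ ↦ R φ x b`), with no hypothesis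
on `S`.  A map `f ∈ ℋ` is `RS`-abstract `p`-summing iff there are a constant
`C > 0` and a Borel probability measure `μ` on `K` with
`S f x b ≤ C * (∫ R φ x b ^ p dμ)^(1/p)` for all `x ∈ E`, `b ∈ G`. -/
theorem pietsch_domination_of_two
    {X Y E G K : Type*} [Nonempty X] [Nonempty Y] [Nonempty E]
    [NormedAddCommGroup G] [NormedSpace ℝ G] [CompleteSpace G]
    [TopologicalSpace K] [CompactSpace K] [T2Space K] [Nonempty K]
    [MeasurableSpace K] [BorelSpace K]
    (ℋ : Set (X → Y)) (hℋ : ℋ.Nonempty)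
    (R : K → E → G → ℝ) (S : (X → Y) → E → G → ℝ)
    (hR0 : ∀ φ x b, 0 ≤ R φ x b) (hS0 : ∀ f x b, 0 ≤ S f x b)
    (p : ℝ) (hp : 0 < p)
    (h2 : ∀ x b, Continuous fun φ => R φ x b)
    (f : X → Y) (hf : f ∈ ℋ) :
    (∃ C > 0, ∀ (m : ℕ) (x : Fin m → E) (b : Fin m → G),
        (∑ j, S f (x j) (b j) ^ p) ^ (1 / p) ≤
          C * ⨆ φ : K, (∑ j, R φ (x j) (b j) ^ p) ^ (1 / p)) ↔
    (∃ C > 0, ∃ μ : Measure K, IsProbabilityMeasure μ ∧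
        ∀ (x : E) (b : G),
          S f x b ≤ C * (∫ φ, R φ x b ^ p ∂μ) ^ (1 / p)) := by
  classical
  have hrp1 : ∀ a : ℝ, 0 ≤ a → (a ^ (1 / p)) ^ p = a := by
    intro a ha
    rw [← Real.rpow_mul ha, one_div_mul_cancel hp.ne', Real.rpow_one]
  have hrp2 : ∀ a : ℝ, 0 ≤ a → (a ^ p) ^ (1 / p) = a := by
    intro a ha
    rw [← Real.rpow_mul ha, mul_one_div_cancel hp.ne', Real.rpow_one]
  have hRcont : ∀ (x : E) (b : G), Continuous fun φ => R φ x b ^ p := fun x b =>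
    (h2 x b).rpow_const fun _ => Or.inr hp.le
  have hRp0 : ∀ (φ : K) (x : E) (b : G), 0 ≤ R φ x b ^ p := fun φ x b =>
    Real.rpow_nonneg (hR0 φ x b) p
  constructor
  · rintro ⟨C, hC, hsum⟩
    have hCp : (0:ℝ) < C ^ p := Real.rpow_pos_of_pos hC p
    -- Step 1: remove the (1/p)-th powers
    have claimA : ∀ (m : ℕ) (x : Fin m → E) (b : Fin m → G),
        (∑ j, S f (x j) (b j) ^ p) ≤ C ^ p * ⨆ φ : K, (∑ j, R φ (x j) (b j) ^ p) := by
      intro m x b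
      set t : K → ℝ := fun φ => ∑ j, R φ (x j) (b j) ^ p with ht_def
      have ht : Continuous t := continuous_finset_sum _ fun j _ => hRcont (x j) (b j)
      have ht0 : ∀ φ, 0 ≤ t φ := fun φ => Finset.sum_nonneg fun j _ => hRp0 φ (x j) (b j)
      obtain ⟨φ1, hφ1⟩ := exists_max (u := fun φ => t φ ^ (1 / p))
        (ht.rpow_const fun _ => Or.inr (by positivity))
      obtain ⟨φ0, hφ0⟩ := exists_max ht
      have hS : (∑ j, S f (x j) (b j) ^ p) ^ (1 / p) ≤ C * (t φ1 ^ (1 / p)) := by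
        have := hsum m x b
        rwa [iSup_eq_at hφ1] at this
      have hsum0 : 0 ≤ ∑ j, S f (x j) (b j) ^ p :=
        Finset.sum_nonneg fun j _ => Real.rpow_nonneg (hS0 f _ _) p
      calc ∑ j, S f (x j) (b j) ^ p = ((∑ j, S f (x j) (b j) ^ p) ^ (1 / p)) ^ p :=
            (hrp1 _ hsum0).symm
        _ ≤ (C * t φ1 ^ (1 / p)) ^ p :=
            Real.rpow_le_rpow (Real.rpow_nonneg hsum0 _) hS hp.le
        _ = C ^ p * (t φ1 ^ (1 / p)) ^ p :=
            Real.mul_rpow hC.le (Real.rpow_nonneg (ht0 _) _)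
        _ = C ^ p * t φ1 := by rw [hrp1 _ (ht0 φ1)]
        _ ≤ C ^ p * t φ0 := mul_le_mul_of_nonneg_left (hφ0 φ1) hCp.le
        _ = C ^ p * ⨆ φ, t φ := by rw [iSup_eq_at hφ0]
    -- Step 2: natural number weights
    have claimNat : ∀ (m : ℕ) (x : Fin m → E) (b : Fin m → G) (ν : Fin m → ℕ),
        (∑ j, (ν j : ℝ) * S f (x j) (b j) ^ p) ≤
          C ^ p * ⨆ φ : K, (∑ j, (ν j : ℝ) * R φ (x j) (b j) ^ p) := by
      intro m x b ν
      let ι := Σ j : Fin m, Fin (ν j)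
      let e : Fin (Fintype.card ι) ≃ ι := (Fintype.equivFin ι).symm
      have hsum_eq : ∀ F : Fin m → ℝ, ∑ k, F (e k).1 = ∑ j, (ν j : ℝ) * F j := by
        intro F
        rw [Fintype.sum_equiv e (fun k => F (e k).1) (fun i => F i.1) (fun k => rfl)]
        rw [← Finset.univ_sigma_univ, Finset.sum_sigma]
        simp [Finset.sum_const, mul_comm]
      have := claimA (Fintype.card ι) (fun k => x (e k).1) (fun k => b (e k).1)
      rw [hsum_eq (fun j => S f (x j) (b j) ^ p)] at this
      have heq : (fun φ : K => ∑ k, R φ (x (e k).1) (b (e k).1) ^ p)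
          = fun φ : K => ∑ j, (ν j : ℝ) * R φ (x j) (b j) ^ p :=
        funext fun φ => hsum_eq fun j => R φ (x j) (b j) ^ p
      rw [show (⨆ φ : K, ∑ k, R φ (x (e k).1) (b (e k).1) ^ p)
          = ⨆ φ : K, ∑ j, (ν j : ℝ) * R φ (x j) (b j) ^ p by rw [heq]] at this
      exact this
    -- Step 3: real nonnegative weights
    have claimReal : ∀ (m : ℕ) (x : Fin m → E) (b : Fin m → G) (α : Fin m → ℝ),
        (∀ j, 0 ≤ α j) →
        (∑ j, α j * S f (x j) (b j) ^ p) ≤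
          C ^ p * ⨆ φ : K, (∑ j, α j * R φ (x j) (b j) ^ p) := by
      intro m x b α hα
      set tα : K → ℝ := fun φ => ∑ j, α j * R φ (x j) (b j) ^ p with htα_def
      have htαc : Continuous tα := continuous_finset_sum _ fun j _ =>
        continuous_const.mul (hRcont (x j) (b j))
      obtain ⟨φα, hφα⟩ := exists_max htαc
      set t1 : K → ℝ := fun φ => ∑ j, R φ (x j) (b j) ^ p with ht1_def
      have ht1c : Continuous t1 := continuous_finset_sum _ fun j _ => hRcont (x j) (b j)
      obtain ⟨φ1, hφ1⟩ := exists_max ht1c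
      have ht10 : 0 ≤ t1 φ1 := Finset.sum_nonneg fun j _ => hRp0 φ1 (x j) (b j)
      rw [iSup_eq_at hφα]
      apply le_of_forall_pos_le_add
      intro ε hε
      obtain ⟨N, hN⟩ := exists_nat_gt (max 1 (C ^ p * t1 φ1 / ε))
      have hN1 : (1:ℝ) ≤ N := le_of_lt (lt_of_le_of_lt (le_max_left _ _) hN)
      have hN0 : (0:ℝ) < N := lt_of_lt_of_le one_pos hN1
      set ν : Fin m → ℕ := fun j => ⌈(N : ℝ) * α j⌉₊ with hν_def
      have hν1 : ∀ j, α j ≤ (ν j : ℝ) / N := by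
        intro j
        rw [le_div_iff₀ hN0]
        calc α j * N = N * α j := mul_comm _ _
          _ ≤ (⌈(N : ℝ) * α j⌉₊ : ℝ) := Nat.le_ceil _
      have hν2 : ∀ j, (ν j : ℝ) / N ≤ α j + 1 / N := by
        intro j
        rw [div_le_iff₀ hN0]
        have h1 : (⌈(N : ℝ) * α j⌉₊ : ℝ) < N * α j + 1 :=
          Nat.ceil_lt_add_one (mul_nonneg hN0.le (hα j))
        calc (ν j : ℝ) ≤ N * α j + 1 := h1.le
          _ = (α j + 1 / N) * N := by field_simp
      obtain ⟨φν, hφν⟩ := exists_max (u := fun φ => ∑ j, (ν j : ℝ) * R φ (x j) (b j) ^ p)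
        (continuous_finset_sum _ fun j _ => continuous_const.mul (hRcont (x j) (b j)))
      have hnat := claimNat m x b ν
      rw [iSup_eq_at hφν] at hnat
      have hstep : ∑ j, α j * S f (x j) (b j) ^ p ≤
          (1 / N) * ∑ j, (ν j : ℝ) * S f (x j) (b j) ^ p := by
        rw [Finset.mul_sum]
        apply Finset.sum_le_sum
        intro j _
        have hSp0 : 0 ≤ S f (x j) (b j) ^ p := Real.rpow_nonneg (hS0 f _ _) p
        calc α j * S f (x j) (b j) ^ p ≤ ((ν j : ℝ) / N) * S f (x j) (b j) ^ p :=
              mul_le_mul_of_nonneg_right (hν1 j) hSp0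
          _ = 1 / N * ((ν j : ℝ) * S f (x j) (b j) ^ p) := by ring
      have hmid : (1 / N) * ∑ j, (ν j : ℝ) * R φν (x j) (b j) ^ p ≤
          tα φα + (1 / N) * t1 φ1 := by
        have h1 : (1 / N) * ∑ j, (ν j : ℝ) * R φν (x j) (b j) ^ p ≤
            tα φν + (1 / N) * t1 φν := by
          rw [htα_def, ht1_def]
          simp only
          rw [Finset.mul_sum, Finset.mul_sum, ← Finset.sum_add_distrib]
          apply Finset.sum_le_sum
          intro j _
          have : (1 / N) * ((ν j : ℝ) * R φν (x j) (b j) ^ p)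
              = ((ν j : ℝ) / N) * R φν (x j) (b j) ^ p := by ring
          rw [this]
          calc ((ν j : ℝ) / N) * R φν (x j) (b j) ^ p
              ≤ (α j + 1 / N) * R φν (x j) (b j) ^ p :=
                mul_le_mul_of_nonneg_right (hν2 j) (hRp0 _ _ _)
            _ = α j * R φν (x j) (b j) ^ p + 1 / N * R φν (x j) (b j) ^ p := by ring
        have h2' : tα φν ≤ tα φα := hφα φν
        have h3 : (1 / N) * t1 φν ≤ (1 / N) * t1 φ1 :=
          mul_le_mul_of_nonneg_left (hφ1 φν) (by positivity)
        linarith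
      have hlast : C ^ p * ((1 / N) * t1 φ1) ≤ ε := by
        have h4 : C ^ p * t1 φ1 / ε < N := lt_of_le_of_lt (le_max_right _ _) hN
        rw [div_lt_iff₀ hε] at h4
        calc C ^ p * ((1 / N) * t1 φ1) = (C ^ p * t1 φ1) / N := by ring
          _ ≤ (ε * N) / N := (div_le_div_iff_of_pos_right hN0).mpr (by linarith)
          _ = ε := by field_simp
      calc ∑ j, α j * S f (x j) (b j) ^ p
          ≤ (1 / N) * ∑ j, (ν j : ℝ) * S f (x j) (b j) ^ p := hstep
        _ ≤ (1 / N) * (C ^ p * ∑ j, (ν j : ℝ) * R φν (x j) (b j) ^ p) :=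
            mul_le_mul_of_nonneg_left hnat (by positivity)
        _ = C ^ p * ((1 / N) * ∑ j, (ν j : ℝ) * R φν (x j) (b j) ^ p) := by ring
        _ ≤ C ^ p * (tα φα + (1 / N) * t1 φ1) :=
            mul_le_mul_of_nonneg_left hmid hCp.le
        _ = C ^ p * tα φα + C ^ p * ((1 / N) * t1 φ1) := by ring
        _ ≤ C ^ p * tα φα + ε := by linarith
    -- Step 4: Hahn–Banach separation in C(K, ℝ)
    set Cp : ℝ := C ^ p with hCp_def
    set 𝒞 : Set C(K, ℝ) := {g | ∃ (m : ℕ) (x : Fin m → E) (b : Fin m → G) (α : Fin m → ℝ),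
      (∀ j, 0 ≤ α j) ∧ ∀ φ, g φ = ∑ j, α j * (S f (x j) (b j) ^ p - Cp * R φ (x j) (b j) ^ p)}
      with h𝒞_def
    set P : Set C(K, ℝ) := {h | ∀ φ, 0 < h φ} with hP_def
    have hPopen : IsOpen P := by
      rw [Metric.isOpen_iff]
      intro h hh
      obtain ⟨φm, hφm⟩ := exists_max (u := fun φ => -h φ) h.continuous.neg
      have hδ : 0 < h φm := hh φm
      refine ⟨h φm, hδ, fun h' hd => ?_⟩
      intro φ
      have h1 : ‖h' - h‖ < h φm := by rwa [← dist_eq_norm]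
      have h2 : |h' φ - h φ| ≤ ‖h' - h‖ := by
        simpa using ContinuousMap.norm_coe_le_norm (h' - h) φ
      have h3 : h φm ≤ h φ := by have := hφm φ; linarith
      have h4 := (abs_le.mp h2).1
      linarith
    have hPconv : Convex ℝ P := by
      intro g1 hg1 g2 hg2 s t hs ht hst
      intro φ
      simp only [ContinuousMap.add_apply, ContinuousMap.smul_apply, smul_eq_mul]
      rcases eq_or_lt_of_le hs with hs0 | hs0
      · have ht1 : t = 1 := by linarith
        rw [← hs0, ht1]
        simpa using hg2 φ
      · have h1 : 0 < s * g1 φ := mul_pos hs0 (hg1 φ)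
        have h2 : 0 ≤ t * g2 φ := mul_nonneg ht (hg2 φ).le
        linarith
    have h𝒞conv : Convex ℝ 𝒞 := by
      rintro g1 ⟨m1, x1, b1, α1, hα1, hg1⟩ g2 ⟨m2, x2, b2, α2, hα2, hg2⟩ s t hs ht hst
      refine ⟨m1 + m2, Fin.append x1 x2, Fin.append b1 b2,
        Fin.append (fun j => s * α1 j) (fun j => t * α2 j), ?_, ?_⟩
      · intro j
        refine Fin.addCases (fun i => ?_) (fun i => ?_) j
        · rw [Fin.append_left]; exact mul_nonneg hs (hα1 i)
        · rw [Fin.append_right]; exact mul_nonneg ht (hα2 i)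
      · intro φ
        have heval : (s • g1 + t • g2) φ = s * g1 φ + t * g2 φ := by
          simp [smul_eq_mul]
        rw [heval, hg1 φ, hg2 φ, Fin.sum_univ_add]
        simp only [Fin.append_left, Fin.append_right]
        rw [Finset.mul_sum, Finset.mul_sum]
        congr 1
        · exact Finset.sum_congr rfl fun i _ => by ring
        · exact Finset.sum_congr rfl fun i _ => by ring
    have h0mem : (0 : C(K, ℝ)) ∈ 𝒞 :=
      ⟨0, Fin.elim0, Fin.elim0, Fin.elim0, fun j => j.elim0, fun φ => by simp⟩
    have hsm : ∀ c : ℝ, 0 ≤ c → ∀ g ∈ 𝒞, c • g ∈ 𝒞 := by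
      rintro c hc g ⟨m, x, b, α, hα, hg⟩
      refine ⟨m, x, b, fun j => c * α j, fun j => mul_nonneg hc (hα j), fun φ => ?_⟩
      have heval : (c • g) φ = c * g φ := by simp [smul_eq_mul]
      rw [heval, hg φ, Finset.mul_sum]
      exact Finset.sum_congr rfl fun i _ => by ring
    have hdisj : Disjoint P 𝒞 := by
      rw [Set.disjoint_left]
      rintro g hgP ⟨m, x, b, α, hα, hg⟩
      obtain ⟨φα, hφα⟩ := exists_max (u := fun φ => ∑ j, α j * R φ (x j) (b j) ^ p)
        (continuous_finset_sum _ fun j _ => continuous_const.mul (hRcont (x j) (b j)))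
      have hcr := claimReal m x b α hα
      rw [iSup_eq_at hφα] at hcr
      have hgφ : g φα = (∑ j, α j * S f (x j) (b j) ^ p)
          - Cp * ∑ j, α j * R φα (x j) (b j) ^ p := by
        rw [hg φα]
        rw [show ∑ j, α j * (S f (x j) (b j) ^ p - Cp * R φα (x j) (b j) ^ p)
            = ∑ j, (α j * S f (x j) (b j) ^ p - Cp * (α j * R φα (x j) (b j) ^ p)) from
          Finset.sum_congr rfl fun i _ => by ring]
        rw [Finset.sum_sub_distrib, ← Finset.mul_sum]
      have := hgP φα
      rw [hgφ] at this
      linarith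
    obtain ⟨L, u, hL1, hL2⟩ := geometric_hahn_banach_open hPconv hPopen h𝒞conv hdisj
    have hu0 : u ≤ 0 := by simpa using hL2 0 h0mem
    have hL𝒞 : ∀ g ∈ 𝒞, 0 ≤ L g := by
      intro g hg
      by_contra hneg
      push_neg at hneg
      have hc : 0 < (u - 1) / L g := div_pos_of_neg_of_neg (by linarith) hneg
      have := hL2 _ (hsm _ hc.le g hg)
      rw [_root_.map_smul, smul_eq_mul, div_mul_cancel₀ _ hneg.ne] at this
      linarith
    have h1P : (1 : C(K, ℝ)) ∈ P := fun φ => by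
      simp only [ContinuousMap.one_apply]
      exact one_pos
    have hL1neg : L 1 < 0 := lt_of_lt_of_le (hL1 1 h1P) hu0
    set c0 : ℝ := -(L 1) with hc0_def
    have hc0pos : 0 < c0 := by simp only [hc0_def]; linarith
    set ℓ : C(K, ℝ) →ₗ[ℝ] ℝ := c0⁻¹ • (-(L.toLinearMap)) with hℓ_def
    have hℓeval : ∀ g : C(K, ℝ), ℓ g = c0⁻¹ * (-(L g)) := fun g => rfl
    have hℓpos : ∀ g : C(K, ℝ), (∀ x, 0 ≤ g x) → 0 ≤ ℓ g := by
      intro g hg0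
      have hLg : L g ≤ 0 := by
        have hstep : ∀ ε : ℝ, 0 < ε → L g < ε * c0 := by
          intro ε hε
          have hgP : g + ε • (1 : C(K, ℝ)) ∈ P := by
            intro φ
            have : (g + ε • (1 : C(K, ℝ))) φ = g φ + ε := by simp [smul_eq_mul]
            rw [this]
            have := hg0 φ
            linarith
          have := hL1 _ hgP
          rw [map_add, _root_.map_smul, smul_eq_mul] at this
          have : L g + ε * L 1 < u := this
          simp only [hc0_def]
          linarith
        by_contra hpos
        push_neg at hpos
        have := hstep (L g / (2 * c0)) (by positivity)
        have heq : L g / (2 * c0) * c0 = L g / 2 := by field_simp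
        rw [heq] at this
        linarith
      rw [hℓeval]
      have h1 : 0 ≤ -(L g) := by linarith
      positivity
    have hℓ1 : ℓ (1 : C(K, ℝ)) = 1 := by
      rw [hℓeval, ← hc0_def, inv_mul_cancel₀ hc0pos.ne']
    obtain ⟨μ, hμprob, hμrepr⟩ := PietschAux.exists_repr ℓ hℓpos hℓ1
    refine ⟨C, hC, μ, hμprob, ?_⟩
    intro x b
    set gR : C(K, ℝ) := ⟨fun φ => Cp * R φ x b ^ p, continuous_const.mul (hRcont x b)⟩
      with hgR_def
    set g0 : C(K, ℝ) := ContinuousMap.const K (S f x b ^ p) - gR with hg0_def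
    have hg0mem : g0 ∈ 𝒞 := by
      refine ⟨1, fun _ => x, fun _ => b, fun _ => 1, fun _ => zero_le_one, fun φ => ?_⟩
      simp [hg0_def, hgR_def]
    have hLg0 : 0 ≤ L g0 := hL𝒞 g0 hg0mem
    have hℓg0 : ℓ g0 ≤ 0 := by
      rw [hℓeval]
      apply mul_nonpos_of_nonneg_of_nonpos (inv_nonneg.mpr hc0pos.le)
      linarith
    have hgR0 : ∀ φ, 0 ≤ gR φ := fun φ => mul_nonneg hCp.le (hRp0 φ x b)
    have hrepr := hμrepr gR hgR0
    have hsplit : ℓ g0 = S f x b ^ p - ℓ gR := by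
      have hg0eq : g0 = (S f x b ^ p) • (1 : C(K, ℝ)) - gR := by
        ext φ; simp [hg0_def, smul_eq_mul]
      rw [hg0eq, map_sub, _root_.map_smul, smul_eq_mul, hℓ1, mul_one]
    have hIR : ∫ φ, gR φ ∂μ = Cp * ∫ φ, R φ x b ^ p ∂μ := by
      simp only [hgR_def, ContinuousMap.coe_mk]
      exact MeasureTheory.integral_const_mul Cp _
    have hI0 : 0 ≤ ∫ φ, R φ x b ^ p ∂μ := integral_nonneg fun φ => hRp0 φ x b
    have hfinal : S f x b ^ p ≤ Cp * ∫ φ, R φ x b ^ p ∂μ := by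
      rw [← hIR]
      linarith
    calc S f x b = (S f x b ^ p) ^ (1 / p) := (hrp2 _ (hS0 f x b)).symm
      _ ≤ (Cp * ∫ φ, R φ x b ^ p ∂μ) ^ (1 / p) :=
          Real.rpow_le_rpow (Real.rpow_nonneg (hS0 f x b) p) hfinal (by positivity)
      _ = Cp ^ (1 / p) * (∫ φ, R φ x b ^ p ∂μ) ^ (1 / p) :=
          Real.mul_rpow hCp.le hI0
      _ = C * (∫ φ, R φ x b ^ p ∂μ) ^ (1 / p) := by
          rw [hCp_def, hrp2 C hC.le]
  · rintro ⟨C, hC, μ, hμ, hdom⟩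
    refine ⟨C, hC, ?_⟩
    intro m x b
    have hint : ∀ (u : K → ℝ), Continuous u → Integrable u μ := fun u hu =>
      hu.integrable_of_hasCompactSupport (isClosed_tsupport _).isCompact
    set t : K → ℝ := fun φ => ∑ j, R φ (x j) (b j) ^ p with ht_def
    have ht : Continuous t := continuous_finset_sum _ fun j _ => hRcont (x j) (b j)
    obtain ⟨φ0, hφ0⟩ := exists_max ht
    have hterm : ∀ j, S f (x j) (b j) ^ p ≤ C ^ p * ∫ φ, R φ (x j) (b j) ^ p ∂μ := by
      intro j
      have hI0 : 0 ≤ ∫ φ, R φ (x j) (b j) ^ p ∂μ :=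
        integral_nonneg fun φ => hRp0 φ (x j) (b j)
      calc S f (x j) (b j) ^ p
          ≤ (C * (∫ φ, R φ (x j) (b j) ^ p ∂μ) ^ (1 / p)) ^ p :=
            Real.rpow_le_rpow (hS0 f _ _) (hdom (x j) (b j)) hp.le
        _ = C ^ p * ((∫ φ, R φ (x j) (b j) ^ p ∂μ) ^ (1 / p)) ^ p :=
            Real.mul_rpow hC.le (Real.rpow_nonneg hI0 _)
        _ = C ^ p * ∫ φ, R φ (x j) (b j) ^ p ∂μ := by rw [hrp1 _ hI0]
    have hsump : ∑ j, S f (x j) (b j) ^ p ≤ C ^ p * t φ0 := by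
      have h1 : ∑ j, S f (x j) (b j) ^ p ≤ C ^ p * ∑ j, ∫ φ, R φ (x j) (b j) ^ p ∂μ := by
        rw [Finset.mul_sum]
        exact Finset.sum_le_sum fun j _ => hterm j
      have h2' : ∑ j, ∫ φ, R φ (x j) (b j) ^ p ∂μ = ∫ φ, t φ ∂μ := by
        rw [ht_def, integral_finset_sum _ fun j _ => hint _ (hRcont (x j) (b j))]
      have h3 : ∫ φ, t φ ∂μ ≤ t φ0 := by
        calc ∫ φ, t φ ∂μ ≤ ∫ _, t φ0 ∂μ := integral_mono (hint t ht) (integrable_const _) hφ0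
          _ = t φ0 := by simp [measure_univ]
      have hCp : (0:ℝ) ≤ C ^ p := (Real.rpow_pos_of_pos hC p).le
      calc ∑ j, S f (x j) (b j) ^ p ≤ C ^ p * ∑ j, ∫ φ, R φ (x j) (b j) ^ p ∂μ := h1
        _ = C ^ p * ∫ φ, t φ ∂μ := by rw [h2']
        _ ≤ C ^ p * t φ0 := mul_le_mul_of_nonneg_left h3 hCp
    have ht0 : ∀ φ, 0 ≤ t φ := fun φ => Finset.sum_nonneg fun j _ => hRp0 φ (x j) (b j)
    obtain ⟨φ1, hφ1⟩ := exists_max (u := fun φ => t φ ^ (1 / p))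
      (ht.rpow_const fun _ => Or.inr (by positivity))
    have hsum0 : 0 ≤ ∑ j, S f (x j) (b j) ^ p :=
      Finset.sum_nonneg fun j _ => Real.rpow_nonneg (hS0 f _ _) p
    rw [iSup_eq_at hφ1]
    calc (∑ j, S f (x j) (b j) ^ p) ^ (1 / p) ≤ (C ^ p * t φ0) ^ (1 / p) :=
          Real.rpow_le_rpow hsum0 hsump (by positivity)
      _ = (C ^ p) ^ (1 / p) * (t φ0) ^ (1 / p) :=
          Real.mul_rpow (Real.rpow_pos_of_pos hC p).le (ht0 φ0)
      _ = C * (t φ0) ^ (1 / p) := by rw [hrp2 C hC.le]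
      _ ≤ C * (t φ1) ^ (1 / p) := mul_le_mul_of_nonneg_left (hφ1 φ0) hC.le
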